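/- Let M, N, m, n', k > 0 with k·m < 1 and k·n' > 1. Then the improper integral ∫_0^∞ dV / (M·V^m + N·V^{n'})^k converges and equals Γ((1−k·m)/(n'−m))·Γ((k·n'−1)/(n'−m)) / (M^k·Γ(k)·(n'−m)) · (M/N)^{(1−k·m)/(n'−m)}. -/

import Mathlib

open MeasureTheory Real

open Set in

lemma beta_Ioo (a b : ℝ) (ha : 0 < a) (hb : 0 < b) :
    IntegrableOn (fun x : ℝ => x ^ (a-1) * (1-x) ^ (b-1)) (Set.Ioo 0 1) ∧
    ∫ x in Set.Ioo (0:ℝ) 1, x ^ (a-1) * (1-x) ^ (b-1) = Gamma a * Gamma b / Gamma (a+b) := by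
  have hceq : ∀ x ∈ Set.Icc (0:ℝ) 1,
      (x:ℂ) ^ ((a:ℂ) - 1) * ((1:ℂ) - (x:ℂ)) ^ ((b:ℂ) - 1)
        = ((x ^ (a-1) * (1-x) ^ (b-1) : ℝ) : ℂ) := by
    intro x hx
    rw [show ((a:ℂ) - 1) = (((a-1 : ℝ)):ℂ) by push_cast; ring,
      show ((b:ℂ) - 1) = (((b-1 : ℝ)):ℂ) by push_cast; ring,
      show ((1:ℂ) - (x:ℂ)) = (((1 - x : ℝ)):ℂ) by push_cast; ring,
      ← Complex.ofReal_cpow hx.1, ← Complex.ofReal_cpow (by linarith [hx.2]), ← Complex.ofReal_mul]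
  have hc : IntervalIntegrable
      (fun x : ℝ => (x:ℂ) ^ ((a:ℂ) - 1) * ((1:ℂ) - (x:ℂ)) ^ ((b:ℂ) - 1)) volume 0 1 :=
    Complex.betaIntegral_convergent (by simpa using ha) (by simpa using hb)
  have hInt : IntegrableOn (fun x : ℝ => x ^ (a-1) * (1-x) ^ (b-1)) (Set.Ioo 0 1) := by
    have h1 : IntegrableOn
        (fun x : ℝ => (x:ℂ) ^ ((a:ℂ) - 1) * ((1:ℂ) - (x:ℂ)) ^ ((b:ℂ) - 1)) (Set.Ioc 0 1) :=
      (intervalIntegrable_iff_integrableOn_Ioc_of_le zero_le_one).mp hc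
    have h2 : IntegrableOn
        (fun x : ℝ => Complex.re ((x:ℂ) ^ ((a:ℂ) - 1) * ((1:ℂ) - (x:ℂ)) ^ ((b:ℂ) - 1)))
        (Set.Ioc 0 1) := h1.re
    refine (IntegrableOn.congr_fun h2 ?_ measurableSet_Ioc).mono_set Set.Ioo_subset_Ioc_self
    intro x hx
    show Complex.re _ = _
    rw [hceq x ⟨hx.1.le, hx.2⟩, Complex.ofReal_re]
  refine ⟨hInt, ?_⟩
  have hval := Complex.Gamma_mul_Gamma_eq_betaIntegral
    (s := (a:ℂ)) (t := (b:ℂ)) (by simpa using ha) (by simpa using hb)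
  rw [Complex.betaIntegral] at hval
  rw [intervalIntegral.integral_congr (g := fun x : ℝ => ((x ^ (a-1) * (1-x) ^ (b-1) : ℝ) : ℂ))
    (by intro x hx; exact hceq x (by simpa using hx))] at hval
  rw [intervalIntegral.integral_ofReal] at hval
  have hG : Complex.Gamma ((a:ℂ) + (b:ℂ)) = ((Gamma (a+b) : ℝ) : ℂ) := by
    rw [show ((a:ℂ) + (b:ℂ)) = (((a+b : ℝ)):ℂ) by push_cast; ring, Complex.Gamma_ofReal]
  rw [hG, Complex.Gamma_ofReal, Complex.Gamma_ofReal, ← Complex.ofReal_mul, ← Complex.ofReal_mul] at hval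
  have hval' : Gamma a * Gamma b = Gamma (a+b) * ∫ x in (0:ℝ)..1, x ^ (a-1) * (1-x) ^ (b-1) := by
    exact_mod_cast hval
  have hGpos : 0 < Gamma (a+b) := Gamma_pos_of_pos (by linarith)
  rw [intervalIntegral.integral_of_le zero_le_one, integral_Ioc_eq_integral_Ioo] at hval'
  rw [eq_div_iff hGpos.ne']
  linarith [hval']

open Set in

lemma beta_Ioi (a b : ℝ) (ha : 0 < a) (hb : 0 < b) :
    IntegrableOn (fun t : ℝ => t ^ (a-1) * (1+t) ^ (-(a+b))) (Set.Ioi 0) ∧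
    ∫ t in Set.Ioi (0:ℝ), t ^ (a-1) * (1+t) ^ (-(a+b)) = Gamma a * Gamma b / Gamma (a+b) := by
  set f : ℝ → ℝ := fun x => x⁻¹ - 1 with hf
  set f' : ℝ → ℝ := fun x => -((x^2)⁻¹) with hf'
  have hderiv : ∀ x ∈ Set.Ioo (0:ℝ) 1, HasDerivWithinAt f (f' x) (Set.Ioo 0 1) x := by
    intro x hx
    exact ((hasDerivAt_inv hx.1.ne').sub_const 1).hasDerivWithinAt
  have hinj : Set.InjOn f (Set.Ioo 0 1) := by
    intro x _ y _ h
    have : x⁻¹ = y⁻¹ := by simpa [hf] using h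
    exact inv_injective this
  have himg : f '' Set.Ioo 0 1 = Set.Ioi (0:ℝ) := by
    ext y
    constructor
    · rintro ⟨x, ⟨hx0, hx1⟩, rfl⟩
      have hxi : 0 < x⁻¹ := inv_pos.mpr hx0
      have hmul := mul_inv_cancel₀ hx0.ne'
      simp only [hf, Set.mem_Ioi]
      nlinarith
    · intro hy
      have hy' : (0:ℝ) < 1 + y := by simp at hy; linarith
      refine ⟨(1+y)⁻¹, ⟨inv_pos.mpr hy', ?_⟩, ?_⟩
      · rw [inv_lt_one_iff₀]
        right; simp at hy; linarith
      · simp [hf, inv_inv]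
  have key := integral_image_eq_integral_abs_deriv_smul measurableSet_Ioo hderiv hinj
    (fun t : ℝ => t ^ (a-1) * (1+t) ^ (-(a+b)))
  have keyInt := integrableOn_image_iff_integrableOn_abs_deriv_smul measurableSet_Ioo hderiv hinj
    (fun t : ℝ => t ^ (a-1) * (1+t) ^ (-(a+b)))
  rw [himg] at key keyInt
  have hptw : ∀ x ∈ Set.Ioo (0:ℝ) 1,
      |f' x| • ((f x) ^ (a-1) * (1 + f x) ^ (-(a+b))) = x ^ (b-1) * (1-x) ^ (a-1) := by
    intro x ⟨hx0, hx1⟩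
    have h1x : (0:ℝ) ≤ 1 - x := by linarith
    have habs : |f' x| = (x^2)⁻¹ := by
      rw [hf', abs_neg, abs_inv, abs_of_pos (by positivity)]
    have hfx : f x = (1-x)/x := by
      simp only [hf]; rw [eq_div_iff hx0.ne', sub_mul, inv_mul_cancel₀ hx0.ne', one_mul]
    have h1fx : 1 + f x = x⁻¹ := by simp only [hf]; ring
    rw [habs, h1fx, hfx, smul_eq_mul, Real.div_rpow h1x hx0.le,
      Real.inv_rpow hx0.le, Real.rpow_neg hx0.le (a+b), inv_inv]
    have hx2 : ((x^2)⁻¹ : ℝ) = x ^ (-2:ℝ) := by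
      rw [Real.rpow_neg hx0.le, show ((2:ℝ)) = ((2:ℕ):ℝ) by norm_num, Real.rpow_natCast]
    have hxa : (x ^ (a-1))⁻¹ = x ^ (-(a-1)) := (Real.rpow_neg hx0.le _).symm
    rw [hx2, div_eq_mul_inv, hxa]
    have hkey : x^(-2:ℝ) * x^(-(a-1)) * x^(a+b) = x^(b-1) := by
      rw [← Real.rpow_add hx0, ← Real.rpow_add hx0]
      ring_nf
    linear_combination (1-x)^(a-1) * hkey
  rw [setIntegral_congr_fun measurableSet_Ioo hptw] at key
  obtain ⟨hIoo, hval⟩ := beta_Ioo b a hb ha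
  constructor
  · rw [keyInt]
    exact (hIoo.congr_fun (fun x hx => (hptw x hx).symm) measurableSet_Ioo)
  · rw [key, hval, mul_comm (Gamma b), add_comm b a]

open Set in
set_option maxHeartbeats 1000000 in
/-- The settling-time integral: ∫₀^∞ dV/(M V^m + N V^{n'})^k converges and equals the
stated Gamma-function expression. -/

theorem settling_time_integral (M N m n' k : ℝ) (hM : 0 < M) (hN : 0 < N) (hm : 0 < m)
    (hn' : 0 < n') (hk : 0 < k) (hkm : k * m < 1) (hkn : 1 < k * n') :
    IntegrableOn (fun V : ℝ => (M * V ^ m + N * V ^ n') ^ (-k)) (Set.Ioi 0) ∧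
    (∫ V in Set.Ioi (0 : ℝ), (M * V ^ m + N * V ^ n') ^ (-k)) =
      Real.Gamma ((1 - k * m) / (n' - m)) * Real.Gamma ((k * n' - 1) / (n' - m)) /
          (M ^ k * Real.Gamma k * (n' - m)) * (M / N) ^ ((1 - k * m) / (n' - m)) := by
  have hp : 0 < n' - m := by
    have : k * m < k * n' := hkm.trans hkn
    have := (mul_lt_mul_iff_right₀ hk).mp this
    linarith
  set p : ℝ := n' - m with hpdef
  set a : ℝ := (1 - k*m)/p with hadef
  set b : ℝ := (k*n' - 1)/p with hbdef
  have ha : 0 < a := div_pos (by linarith) hp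
  have hb : 0 < b := div_pos (by linarith) hp
  have hab : a + b = k := by
    rw [hadef, hbdef, ← add_div, hpdef]
    field_simp [show n' - m ≠ 0 from hp.ne']
    ring
  have hpa : p * a = 1 - k*m := by rw [hadef]; field_simp
  have hNM : (0:ℝ) < N/M := div_pos hN hM
  set f : ℝ → ℝ := fun V => (N/M) * V ^ p with hfdef
  set f' : ℝ → ℝ := fun V => (N/M) * (p * V ^ (p-1)) with hf'def
  have hderiv : ∀ V ∈ Set.Ioi (0:ℝ), HasDerivWithinAt f (f' V) (Set.Ioi 0) V := by
    intro V hV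
    exact ((Real.hasDerivAt_rpow_const (Or.inl (ne_of_gt hV))).const_mul (N/M)).hasDerivWithinAt
  have hinj : Set.InjOn f (Set.Ioi 0) := by
    intro x hx y hy h
    have h2 : x ^ p = y ^ p := mul_left_cancel₀ hNM.ne' h
    rcases lt_trichotomy x y with hlt | heq | hgt
    · exact absurd h2 (Real.rpow_lt_rpow (le_of_lt hx) hlt hp).ne
    · exact heq
    · exact absurd h2.symm (Real.rpow_lt_rpow (le_of_lt hy) hgt hp).ne
  have himg : f '' Set.Ioi 0 = Set.Ioi (0:ℝ) := by
    ext y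
    constructor
    · rintro ⟨V, hV, rfl⟩
      have hV' : (0:ℝ) < V := hV
      simp only [hfdef, Set.mem_Ioi]
      positivity
    · intro hy
      have hy' : (0:ℝ) < y := hy
      refine ⟨((M/N) * y) ^ (1/p), Set.mem_Ioi.mpr (by positivity), ?_⟩
      simp only [hfdef]
      rw [← Real.rpow_mul (by positivity), one_div_mul_cancel hp.ne', Real.rpow_one]
      field_simp
  set g : ℝ → ℝ := fun t => t ^ (a-1) * (1+t) ^ (-(a+b)) with hgdef
  have key := integral_image_eq_integral_abs_deriv_smul measurableSet_Ioi hderiv hinj g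
  have keyInt := integrableOn_image_iff_integrableOn_abs_deriv_smul measurableSet_Ioi hderiv hinj g
  rw [himg] at key keyInt
  set C : ℝ := p * (N/M) ^ a * M ^ k with hCdef
  have hC : 0 < C := by positivity
  set F : ℝ → ℝ := fun V => (M * V ^ m + N * V ^ n') ^ (-k) with hFdef
  have hptw : ∀ V ∈ Set.Ioi (0:ℝ), |f' V| • g (f V) = C * F V := by
    intro V hV
    have hV' : (0:ℝ) < V := hV
    have hVp : 0 < V ^ p := Real.rpow_pos_of_pos hV' p
    have hVm : 0 < V ^ m := Real.rpow_pos_of_pos hV' m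
    have hX : 0 < M * V ^ m + N * V ^ n' := by
      have := Real.rpow_pos_of_pos hV' n'; positivity
    have habs : |f' V| = (N/M) * (p * V ^ (p-1)) := abs_of_pos (by positivity)
    have hpm : V ^ p * V ^ m = V ^ n' := by
      rw [← Real.rpow_add hV']; congr 1; rw [hpdef]; ring
    have h1f : 1 + f V = (M * V ^ m + N * V ^ n') / (M * V ^ m) := by
      rw [hfdef, eq_div_iff (by positivity)]
      field_simp
      rw [← hpm]
      ring
    have hgf : g (f V) = (N/M) ^ (a-1) * V ^ (p*(a-1)) *
        ((M * V ^ m + N * V ^ n') ^ (-(a+b)) * (M ^ (a+b) * V ^ (m*(a+b)))) := by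
      rw [hgdef]
      simp only
      rw [h1f, hfdef]
      rw [Real.mul_rpow hNM.le hVp.le, Real.div_rpow hX.le (by positivity),
        ← Real.rpow_mul hV'.le]
      rw [Real.rpow_neg hX.le, Real.rpow_neg (by positivity : (0:ℝ) ≤ M * V ^ m),
        Real.mul_rpow hM.le hVm.le, ← Real.rpow_mul hV'.le]
      congr 1
      rw [div_eq_mul_inv, inv_inv]
    rw [habs, smul_eq_mul, hgf]
    have hcol1 : (N/M) * (N/M) ^ (a-1) = (N/M) ^ a := by
      nth_rewrite 1 [← Real.rpow_one (N/M)]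
      rw [← Real.rpow_add hNM]; ring_nf
    have hcol2 : V ^ (p-1) * V ^ (p*(a-1)) * V ^ (m*(a+b)) = 1 := by
      rw [← Real.rpow_add hV', ← Real.rpow_add hV',
        show p - 1 + p*(a-1) + m*(a+b) = p*a - 1 + m*k by rw [hab]; ring,
        hpa, show 1 - k*m - 1 + m*k = 0 by ring, Real.rpow_zero]
    have hMab : M ^ (a+b) = M ^ k := by rw [hab]
    rw [hCdef, hFdef, hMab, show -(a+b) = -k by rw [hab]]
    simp only
    linear_combination
      (p * M^k * (M * V ^ m + N * V ^ n') ^ (-k) *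
          (V^(p-1) * V^(p*(a-1)) * V^(m*(a+b)))) * hcol1 +
      (p * M^k * (M * V ^ m + N * V ^ n') ^ (-k) * (N/M)^a) * hcol2
  obtain ⟨hgInt, hgVal⟩ := beta_Ioi a b ha hb
  have hInt2 : IntegrableOn (fun V => |f' V| • g (f V)) (Set.Ioi 0) volume := keyInt.mp hgInt
  have hInt3 : IntegrableOn (fun V => C * F V) (Set.Ioi 0) volume :=
    IntegrableOn.congr_fun hInt2 hptw measurableSet_Ioi
  have hIntF : IntegrableOn F (Set.Ioi 0) volume := by
    have h4 := hInt3.const_mul C⁻¹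
    have h5 : (fun V => C⁻¹ * (C * F V)) = F := by
      funext V; rw [← mul_assoc, inv_mul_cancel₀ hC.ne', one_mul]
    rwa [h5] at h4
  rw [setIntegral_congr_fun measurableSet_Ioi hptw, MeasureTheory.integral_const_mul] at key
  have hkey2 : C * ∫ V in Set.Ioi (0:ℝ), F V = Gamma a * Gamma b / Gamma (a+b) :=
    key.symm.trans hgVal
  have hFval : ∫ V in Set.Ioi (0:ℝ), F V = (Gamma a * Gamma b / Gamma (a+b)) / C := by
    rw [eq_div_iff hC.ne']
    linear_combination hkey2
  refine ⟨hIntF, ?_⟩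
  rw [hFval, hab, hCdef]
  have hgm : Gamma k ≠ 0 := (Gamma_pos_of_pos hk).ne'
  have hu : (0:ℝ) < (N/M) ^ a := Real.rpow_pos_of_pos hNM a
  have hone : (N/M) ^ a * (M/N) ^ a = 1 := by
    rw [← Real.mul_rpow hNM.le (by positivity),
      show N/M*(M/N) = 1 by field_simp, Real.one_rpow]
  have hv : (M/N) ^ a = ((N/M) ^ a)⁻¹ := by
    field_simp
    linear_combination hone
  rw [hv]
  have hMk : (0:ℝ) < M ^ k := Real.rpow_pos_of_pos hM k
  field_simp
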